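/- Let B be a ring and let b, a_1, …, a_n ∈ B generate the unit ideal of B. Let v be a valuation on B with value group Γ such that v(a_i) ≤ v(b) ≠ 0 for all i, and let v' be the primary specialization of v associated with the convex subgroup cΓ_v. Then v(b) ∈ cΓ_v, so v'(b) = v(b) ≠ 0, and v'(a_i) ≤ v'(b) for all i. -/

import Mathlib

/-- A subgroup `Λ` of the units of `Γ` is *convex* if `γ ∈ Λ` whenever
`λ ≤ γ ≤ 1` or `1 ≤ γ ≤ λ` for some `λ ∈ Λ`. -/
def IsConvexSubgroup {Γ : Type*} [LinearOrderedCommGroupWithZero Γ] (Λ : Subgroup Γˣ) : Prop :=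
  ∀ γ : Γˣ, (∃ l ∈ Λ, (((l : Γ) ≤ (γ : Γ) ∧ (γ : Γ) ≤ 1) ∨ ((1 : Γ) ≤ (γ : Γ) ∧ (γ : Γ) ≤ (l : Γ)))) →
    γ ∈ Λ

/-- An element `g` of `Γ` lies in (the image with zero of) a subgroup `Λ` of `Γˣ`. -/
def MemWZ {Γ : Type*} [LinearOrderedCommGroupWithZero Γ] (Λ : Subgroup Γˣ) (g : Γ) : Prop :=
  ∃ u ∈ Λ, (u : Γ) = g

/-- let `b, a_1, …, a_n` generate the unit ideal, let `v` be a valuation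
with `v (a i) ≤ v b ≠ 0`, let `Λ₀ = cΓ_v` be the smallest convex subgroup containing
`{v x : 1 ≤ v x}` and let `v'` be the primary specialization of `v` associated with `Λ₀`.
Then `v b ∈ cΓ_v`, so `v' b = v b ≠ 0`, and `v' (a i) ≤ v' b` for all `i`. -/
theorem stmt7 {B : Type*} [CommRing B] {Γ : Type*} [LinearOrderedCommGroupWithZero Γ]
    (v : Valuation B Γ) {n : ℕ} (b : B) (a : Fin n → B)
    (hspan : Ideal.span ({b} ∪ Set.range a) = ⊤)
    (hle : ∀ i, v (a i) ≤ v b) (hb : v b ≠ 0)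
    (Λ₀ : Subgroup Γˣ) (hconv : IsConvexSubgroup Λ₀)
    (hc : ∀ x, 1 ≤ v x → MemWZ Λ₀ (v x))
    (hmin : ∀ Λ' : Subgroup Γˣ, IsConvexSubgroup Λ' → (∀ x, 1 ≤ v x → MemWZ Λ' (v x)) → Λ₀ ≤ Λ')
    (v' : Valuation B Γ)
    (hv' : ∀ x, (MemWZ Λ₀ (v x) ∧ v' x = v x) ∨ (¬ MemWZ Λ₀ (v x) ∧ v' x = 0)) :
    MemWZ Λ₀ (v b) ∧ v' b = v b ∧ v' b ≠ 0 ∧ ∀ i, v' (a i) ≤ v' b := by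
  -- First show `MemWZ Λ₀ (v b)`.
  have hmem : MemWZ Λ₀ (v b) := by
    classical
    rcases le_or_gt 1 (v b) with h1b | h1b
    · exact hc b h1b
    · -- find a combination `1 = ∑ f i * i` over `{b} ∪ range a`
      have h1 : (1 : B) ∈ Ideal.span ({b} ∪ Set.range a) := by
        rw [hspan]; trivial
      have hsEq : ({b} ∪ Set.range a : Set B)
          = ↑(insert b (Finset.image a Finset.univ)) := by
        simp
      rw [hsEq] at h1
      obtain ⟨f, -, hf⟩ := Submodule.mem_span_finset.mp h1
      -- some term has valuation ≥ 1
      have hex : ∃ c ∈ insert b (Finset.image a Finset.univ), (1 : Γ) ≤ v (f c * c) := by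
        by_contra hcon
        push_neg at hcon
        have hlt : v (∑ i ∈ insert b (Finset.image a Finset.univ), f i • i) < 1 :=
          v.map_sum_lt one_ne_zero (fun i hi => by simpa [smul_eq_mul] using hcon i hi)
        rw [hf] at hlt
        simp at hlt
      obtain ⟨c, hcs, hvc⟩ := hex
      have hcb : v c ≤ v b := by
        rcases Finset.mem_insert.mp hcs with rfl | hcs'
        · exact le_rfl
        · obtain ⟨i, _, rfl⟩ := Finset.mem_image.mp hcs'
          exact hle i
      have key : (1 : Γ) ≤ v (f c) * v b := by
        calc (1 : Γ) ≤ v (f c * c) := hvc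
          _ = v (f c) * v c := v.map_mul _ _
          _ ≤ v (f c) * v b := mul_le_mul_right hcb _
      have hfc1 : (1 : Γ) ≤ v (f c) := by
        by_contra hx
        push_neg at hx
        have : v (f c) * v b < 1 := by
          calc v (f c) * v b ≤ v (f c) * 1 := mul_le_mul_right (le_of_lt h1b) _
            _ = v (f c) := mul_one _
            _ < 1 := hx
        exact absurd key (not_le.mpr this)
      obtain ⟨u, hu, huv⟩ := hc (f c) hfc1
      have hune : (u : Γ) ≠ 0 := (u : Γˣ).ne_zero
      have hlow : ((u⁻¹ : Γˣ) : Γ) ≤ v b := by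
        have hne : v (f c) ≠ 0 := huv ▸ hune
        have h2 := mul_le_mul_right key (v (f c))⁻¹
        rw [mul_one, inv_mul_cancel_left₀ hne] at h2
        rw [Units.val_inv_eq_inv_val, huv]
        exact h2
      refine ⟨Units.mk0 (v b) hb, ?_, rfl⟩
      exact hconv _ ⟨u⁻¹, inv_mem hu, Or.inl ⟨by simpa using hlow, le_of_lt h1b⟩⟩
  have hvb : v' b = v b := by
    rcases hv' b with ⟨_, h⟩ | ⟨h, _⟩
    · exact h
    · exact absurd hmem h
  refine ⟨hmem, hvb, by rw [hvb]; exact hb, fun i => ?_⟩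
  rcases hv' (a i) with ⟨_, h⟩ | ⟨_, h⟩
  · rw [h, hvb]; exact hle i
  · rw [h]; exact zero_le'
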